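/- Let N ≥ 0, set n := 2N+2, let T be an n×n complex matrix satisfying T·conj(T) = −I (conj denotes entrywise complex conjugation, I the identity), and let X be an n×(N+1) complex matrix. Define f := det of the n×n matrix whose first N+1 columns are those of X and whose last N+1 columns are those of T·conj(X). Then det(T)·conj(f) = f; in particular, since T is invertible, conj(f) = det(T)⁻¹·f. -/

import Mathlib

open Matrix

/-- The double Casoratian `f = |X ; T·conj(X)|` built from an `(2N+2) × (N+1)` column block
`X` and its conjugate-reduction partner `T·conj(X)`, where `T·conj(T) = -I`, satisfies
`det(T)·conj(f) = f`, and hence `conj(f) = det(T)⁻¹·f`. -/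
theorem casoratian_conj_f (N : ℕ)
    (T : Matrix (Fin (2 * N + 2)) (Fin (2 * N + 2)) ℂ)
    (hT : T * T.map (starRingEnd ℂ) = -1)
    (X : Matrix (Fin (2 * N + 2)) (Fin (N + 1)) ℂ)
    (f : ℂ)
    (hf : f = Matrix.det (Matrix.of fun i j : Fin (2 * N + 2) =>
      if h : (j : ℕ) < N + 1 then X i ⟨(j : ℕ), h⟩
      else (T * X.map (starRingEnd ℂ)) i
        ⟨(j : ℕ) - (N + 1), by have := j.isLt; omega⟩)) :
    T.det * starRingEnd ℂ f = f ∧ starRingEnd ℂ f = T.det⁻¹ * f := by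
  set c := starRingEnd ℂ with hc
  set M : Matrix (Fin (2 * N + 2)) (Fin (2 * N + 2)) ℂ :=
    Matrix.of fun i j : Fin (2 * N + 2) =>
      if h : (j : ℕ) < N + 1 then X i ⟨(j : ℕ), h⟩
      else (T * X.map c) i ⟨(j : ℕ) - (N + 1), by have := j.isLt; omega⟩ with hM
  -- the block-swap matrix J
  set J : Matrix (Fin (2 * N + 2)) (Fin (2 * N + 2)) ℂ :=
    Matrix.of fun j l : Fin (2 * N + 2) =>
      if (l : ℕ) < N + 1 then (if (j : ℕ) = (l : ℕ) + (N + 1) then 1 else 0)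
      else (if (j : ℕ) = (l : ℕ) - (N + 1) then -1 else 0) with hJ
  -- key matrix identity
  have key : T * M.map c = M * J := by
    ext i l
    rw [Matrix.mul_apply, Matrix.mul_apply]
    by_cases hl : (l : ℕ) < N + 1
    · -- LHS column is (T * X.map c) column l
      have hL : ∑ j, T i j * (M.map c) j l = (T * X.map c) i ⟨(l : ℕ), hl⟩ := by
        rw [Matrix.mul_apply]
        refine Finset.sum_congr rfl fun j _ => ?_
        simp [hM, hl, Matrix.map_apply, show (l : ℕ) ≤ N by omega]
      rw [hL]
      -- RHS: only j = l + (N+1) contributes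
      have hlk : (l : ℕ) + (N + 1) < 2 * N + 2 := by omega
      rw [Finset.sum_eq_single (⟨(l : ℕ) + (N + 1), hlk⟩ : Fin (2 * N + 2))]
      · simp only [hM, hJ, Matrix.of_apply]
        rw [dif_neg (by omega), if_pos hl, if_pos (by simp)]
        simp
      · intro b _ hb
        simp only [hJ, Matrix.of_apply, if_pos hl]
        rw [if_neg, mul_zero]
        intro hbe
        exact hb (Fin.ext hbe)
      · intro h; exact absurd (Finset.mem_univ _) h
    · -- LHS column is -X column (l - (N+1))
      have hlk : (l : ℕ) - (N + 1) < N + 1 := by have := l.isLt; omega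
      have hL : ∑ j, T i j * (M.map c) j l = -(X i ⟨(l : ℕ) - (N + 1), hlk⟩) := by
        have : ∀ j, (M.map c) j l = ∑ m, c (T j m) * X m ⟨(l : ℕ) - (N + 1), hlk⟩ := by
          intro j
          simp only [Matrix.map_apply, hM, Matrix.of_apply, dif_neg hl, Matrix.mul_apply]
          rw [map_sum]
          refine Finset.sum_congr rfl fun m _ => ?_
          simp [Matrix.map_apply]
        calc ∑ j, T i j * (M.map c) j l
            = ∑ j, ∑ m, T i j * (c (T j m) * X m ⟨(l : ℕ) - (N + 1), hlk⟩) := by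
              refine Finset.sum_congr rfl fun j _ => ?_
              rw [this, Finset.mul_sum]
          _ = ∑ m, (∑ j, T i j * c (T j m)) * X m ⟨(l : ℕ) - (N + 1), hlk⟩ := by
              rw [Finset.sum_comm]
              refine Finset.sum_congr rfl fun m _ => ?_
              rw [Finset.sum_mul]
              exact Finset.sum_congr rfl fun j _ => (mul_assoc _ _ _).symm
          _ = ∑ m, ((T * T.map c) i m) * X m ⟨(l : ℕ) - (N + 1), hlk⟩ := by
              refine Finset.sum_congr rfl fun m _ => ?_
              rw [Matrix.mul_apply]
              simp [Matrix.map_apply]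
          _ = -(X i ⟨(l : ℕ) - (N + 1), hlk⟩) := by
              rw [hT]
              rw [Finset.sum_eq_single i]
              · simp
              · intro b _ hb; simp [Matrix.one_apply, hb.symm, Ne.symm hb]
              · intro h; exact absurd (Finset.mem_univ _) h
      rw [hL]
      rw [Finset.sum_eq_single (⟨(l : ℕ) - (N + 1), by omega⟩ : Fin (2 * N + 2))]
      · simp only [hM, hJ, Matrix.of_apply]
        rw [dif_pos hlk, if_neg hl, if_pos (by simp)]
        ring
      · intro b _ hb
        simp only [hJ, Matrix.of_apply, if_neg hl]
        rw [if_neg, mul_zero]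
        intro hbe
        exact hb (Fin.ext hbe)
      · intro h; exact absurd (Finset.mem_univ _) h
  -- det J = 1
  have hdetJ : J.det = 1 := by
    have h2 : 2 * N + 2 = (N + 1) + (N + 1) := by omega
    set e : Fin (2 * N + 2) ≃ (Fin (N + 1) ⊕ Fin (N + 1)) :=
      (finCongr h2).trans finSumFinEquiv.symm with he
    have heval : ∀ j : Fin (2 * N + 2),
        (if h : (j : ℕ) < N + 1 then (Sum.inl ⟨(j : ℕ), h⟩ : Fin (N+1) ⊕ Fin (N+1))
         else Sum.inr ⟨(j : ℕ) - (N + 1), by have := j.isLt; omega⟩) = e j := by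
      intro j
      rw [he]
      simp only [Equiv.trans_apply]
      rw [Equiv.eq_symm_apply]
      by_cases hj : (j : ℕ) < N + 1
      · rw [dif_pos hj]
        apply Fin.ext
        simp [finSumFinEquiv]
      · rw [dif_neg hj]
        apply Fin.ext
        have := j.isLt
        simp [finSumFinEquiv, Fin.natAdd]
        omega
    set J' : Matrix (Fin (N+1) ⊕ Fin (N+1)) (Fin (N+1) ⊕ Fin (N+1)) ℂ :=
      Matrix.fromBlocks 0 (-1) 1 0 with hJ'
    have hsub : J = J'.submatrix e e := by
      ext j l
      rw [Matrix.submatrix_apply, ← heval j, ← heval l]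
      by_cases hj : (j : ℕ) < N + 1 <;> by_cases hl : (l : ℕ) < N + 1
      · rw [dif_pos hj, dif_pos hl]
        simp only [hJ, Matrix.of_apply, hJ', Matrix.fromBlocks_apply₁₁, Matrix.zero_apply,
          if_pos hl]
        rw [if_neg (by omega)]
      · rw [dif_pos hj, dif_neg hl]
        simp only [hJ, Matrix.of_apply, hJ', Matrix.fromBlocks_apply₁₂, Matrix.neg_apply,
          Matrix.one_apply, Fin.mk.injEq, if_neg hl]
        by_cases hjl : (j : ℕ) = (l : ℕ) - (N + 1)
        · rw [if_pos hjl, if_pos hjl]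
        · rw [if_neg hjl, if_neg hjl, neg_zero]
      · rw [dif_neg hj, dif_pos hl]
        simp only [hJ, Matrix.of_apply, hJ', Matrix.fromBlocks_apply₂₁, Matrix.one_apply,
          Fin.mk.injEq, if_pos hl]
        by_cases hjl : (j : ℕ) = (l : ℕ) + (N + 1)
        · rw [if_pos hjl, if_pos (by omega)]
        · rw [if_neg hjl, if_neg (by omega)]
      · rw [dif_neg hj, dif_neg hl]
        simp only [hJ, Matrix.of_apply, hJ', Matrix.fromBlocks_apply₂₂, Matrix.zero_apply,
          if_neg hl]
        rw [if_neg (by have := l.isLt; omega)]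
    have hdetJ' : J'.det = 1 := by
      have hfact : J' = Matrix.fromBlocks 1 (-1) 0 1 * Matrix.fromBlocks 1 0 1 1 *
          Matrix.fromBlocks (1 : Matrix (Fin (N+1)) (Fin (N+1)) ℂ) (-1) 0 1 := by
        rw [Matrix.fromBlocks_multiply, Matrix.fromBlocks_multiply, hJ',
          Matrix.fromBlocks_inj]
        refine ⟨by noncomm_ring, by noncomm_ring, by noncomm_ring, by noncomm_ring⟩
      rw [hfact, Matrix.det_mul, Matrix.det_mul, Matrix.det_fromBlocks_zero₂₁,
        Matrix.det_fromBlocks_zero₁₂]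
      simp
    rw [hsub, Matrix.det_submatrix_equiv_self, hdetJ']
  -- conclude part 1
  have hcf : c f = (M.map c).det := by
    rw [hf, RingHom.map_det, RingHom.mapMatrix_apply]
  have part1 : T.det * c f = f := by
    have := congrArg Matrix.det key
    rw [Matrix.det_mul, Matrix.det_mul, hdetJ, mul_one, ← hcf] at this
    rw [this, hf]
  refine ⟨part1, ?_⟩
  have hdetT : T.det * c T.det = 1 := by
    have := congrArg Matrix.det hT
    rw [Matrix.det_mul] at this
    have hmap : c T.det = (T.map ⇑c).det := by
      rw [RingHom.map_det, RingHom.mapMatrix_apply]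
    rw [hmap, this]
    rw [Matrix.det_neg, Matrix.det_one, mul_one, Fintype.card_fin,
      show 2 * N + 2 = 2 * (N + 1) by ring, pow_mul]
    norm_num
  have hTne : T.det ≠ 0 := by
    intro h
    rw [h, zero_mul] at hdetT
    exact zero_ne_one hdetT
  field_simp
  rw [mul_comm] at part1
  exact part1
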